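/- Clean detail-energy contraction (special case of the detail-energy bound with vanishing coarse-to-detail coupling): under the setting of the detail-energy control proposition, assume additionally Q_d(M(Q_c z)) = 0 for all z ∈ H and Q_d b = 0. Then E[‖Q_d X'‖₂²] ≤ ρ²·(1−w)²·E[‖Q_d X‖₂²] + σ²·(1−w')²·E[‖Q_d η‖₂²]. -/

import Mathlib

open scoped BigOperators
open MeasureTheory

namespace Stroke

/-- The space of real `(m·k) × (n·k)` matrices, as functions on index pairs. -/
abbrev H (m n k : ℕ) : Type := Fin (m * k) → Fin (n * k) → ℝ

/-- The grid index `(i/k)·k + r`, i.e. the `r`-th index inside the block containing `i`. -/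
def blk (d k : ℕ) (i : Fin (d * k)) (r : Fin k) : Fin (d * k) :=
  ⟨i.val / k * k + r.val, by
    have hk : 0 < k := r.pos
    have h1 : i.val / k < d := (Nat.div_lt_iff_lt_mul hk).mpr i.isLt
    calc i.val / k * k + r.val < i.val / k * k + k := Nat.add_lt_add_left r.isLt _
      _ = (i.val / k + 1) * k := by ring
      _ ≤ d * k := Nat.mul_le_mul (Nat.succ_le_of_lt h1) le_rfl⟩

/-- The stroke operator `S_k`: average pooling over each `k × k` block followed by
nearest-neighbor upsampling, i.e. every entry of block `B_{p,q}` is replaced by the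
block average. -/
noncomputable def S {m n k : ℕ} (x : H m n k) : H m n k :=
  fun i j => (1 / (k : ℝ) ^ 2) *
    ∑ r1 : Fin k, ∑ r2 : Fin k, x (blk m k i r1) (blk n k j r2)

/-- The inner product `⟨x,y⟩ = ∑_{i,j} x[i,j]·y[i,j]` on `H`. -/
def ip {m n k : ℕ} (x y : H m n k) : ℝ := ∑ i, ∑ j, x i j * y i j

/-- The norm `‖x‖₂ = √⟨x,x⟩` on `H`. -/
noncomputable def norm2 {m n k : ℕ} (x : H m n k) : ℝ := Real.sqrt (ip x x)

/-- The stroke mixing map `A_w = (1-w)·id + w·S_k`. -/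
noncomputable def A {m n k : ℕ} (w : ℝ) (x : H m n k) : H m n k :=
  (1 - w) • x + w • S x

/-- The coarse projection `Q_c = S_k`. -/
noncomputable def Qc {m n k : ℕ} (x : H m n k) : H m n k := S x

/-- The detail projection `Q_d = id - S_k`. -/
noncomputable def Qd {m n k : ℕ} (x : H m n k) : H m n k := x - S x

/-- A matrix is block-constant if it is constant on each block `B_{p,q}`. -/
def BlockConst {m n k : ℕ} (v : H m n k) : Prop :=
  ∀ (i i' : Fin (m * k)) (j j' : Fin (n * k)),
    i.val / k = i'.val / k → j.val / k = j'.val / k → v i j = v i' j'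


section Aux
variable {m n k : ℕ}

lemma blk_div (d : ℕ) (i : Fin (d * k)) (r : Fin k) :
    (blk d k i r).val / k = i.val / k := by
  have hk : 0 < k := r.pos
  show (i.val / k * k + r.val) / k = i.val / k
  rw [add_comm, Nat.add_mul_div_right _ _ hk, Nat.div_eq_of_lt r.isLt, zero_add]

lemma blk_blk (d : ℕ) (i : Fin (d * k)) (r r' : Fin k) :
    blk d k (blk d k i r) r' = blk d k i r' := by
  apply Fin.ext
  show (blk d k i r).val / k * k + r'.val = i.val / k * k + r'.val
  rw [blk_div]

lemma S_blk (x : H m n k) (i : Fin (m*k)) (j : Fin (n*k)) (r1 r2 : Fin k) :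
    S x (blk m k i r1) (blk n k j r2) = S x i j := by
  unfold S
  congr 1
  exact Finset.sum_congr rfl fun r1' _ => Finset.sum_congr rfl fun r2' _ => by
    rw [blk_blk, blk_blk]

lemma S_S (x : H m n k) : S (S x) = S x := by
  funext i j
  have hk0 : 0 < k := by
    rcases Nat.eq_zero_or_pos k with h | h
    · exact absurd i.isLt (by simp [h])
    · exact h
  have hk : ((k : ℝ))^2 ≠ 0 := by positivity
  show (1 / (k : ℝ) ^ 2) * ∑ r1 : Fin k, ∑ r2 : Fin k, S x (blk m k i r1) (blk n k j r2) = S x i j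
  simp only [S_blk, Finset.sum_const, Finset.card_univ, Fintype.card_fin, nsmul_eq_mul]
  field_simp

lemma S_add (x y : H m n k) : S (x + y) = S x + S y := by
  funext i j
  simp only [S, Pi.add_apply, Finset.sum_add_distrib, mul_add]

lemma S_smul (c : ℝ) (x : H m n k) : S (c • x) = c • S x := by
  funext i j
  simp only [S, Pi.smul_apply, smul_eq_mul, ← Finset.mul_sum]
  ring

lemma S_sub (x y : H m n k) : S (x - y) = S x - S y := by
  have := S_add (x - y) y
  simp only [sub_add_cancel] at this
  rw [this]; abel

lemma Qd_add' (x y : H m n k) : Qd (x + y) = Qd x + Qd y := by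
  unfold Qd; rw [S_add]; abel

lemma Qd_smul' (c : ℝ) (x : H m n k) : Qd (c • x) = c • Qd x := by
  unfold Qd; rw [S_smul, smul_sub]

lemma Qd_Qd (x : H m n k) : Qd (Qd x) = Qd x := by
  unfold Qd; rw [S_sub, S_S]; abel

lemma Qd_S (x : H m n k) : Qd (S x) = 0 := by
  unfold Qd; rw [S_S]; abel

lemma ip_self_nonneg (x : H m n k) : 0 ≤ ip x x :=
  Finset.sum_nonneg fun i _ => Finset.sum_nonneg fun j _ => mul_self_nonneg _

lemma norm2_sq (x : H m n k) : norm2 x ^ 2 = ip x x :=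
  Real.sq_sqrt (ip_self_nonneg x)

lemma norm2_nonneg (x : H m n k) : 0 ≤ norm2 x := Real.sqrt_nonneg _

lemma ip_smul_smul (c d : ℝ) (x y : H m n k) :
    ip (c • x) (d • y) = c * d * ip x y := by
  unfold ip
  simp only [Pi.smul_apply, smul_eq_mul, Finset.mul_sum]
  exact Finset.sum_congr rfl fun i _ => Finset.sum_congr rfl fun j _ => by ring

lemma norm2_smul (c : ℝ) (x : H m n k) : norm2 (c • x) = |c| * norm2 x := by
  unfold norm2
  rw [ip_smul_smul, ← sq, Real.sqrt_mul (sq_nonneg c), Real.sqrt_sq_eq_abs]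

lemma ip_expand (a c : H m n k) :
    ip (a + c) (a + c) = ip a a + 2 * ip a c + ip c c := by
  unfold ip
  rw [Finset.mul_sum, ← Finset.sum_add_distrib, ← Finset.sum_add_distrib]
  refine Finset.sum_congr rfl fun i _ => ?_
  rw [Finset.mul_sum, ← Finset.sum_add_distrib, ← Finset.sum_add_distrib]
  refine Finset.sum_congr rfl fun j _ => ?_
  simp only [Pi.add_apply]; ring

/-- `S` as a linear map. -/
noncomputable def Slm (m n k : ℕ) : H m n k →ₗ[ℝ] H m n k :=
  { toFun := S, map_add' := S_add, map_smul' := S_smul }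

/-- `Q_d` as a linear map. -/
noncomputable def Qdlm (m n k : ℕ) : H m n k →ₗ[ℝ] H m n k := LinearMap.id - Slm m n k

lemma Qdlm_apply (x : H m n k) : Qdlm m n k x = Qd x := rfl

/-- Coordinate evaluation as a linear map. -/
noncomputable def evalLm (i : Fin (m*k)) (j : Fin (n*k)) : H m n k →ₗ[ℝ] ℝ :=
  { toFun := fun z => z i j, map_add' := fun _ _ => rfl, map_smul' := fun _ _ => rfl }

section Meas
variable {Ω : Type*} [MeasurableSpace Ω] {P : Measure Ω} [IsProbabilityMeasure P]

lemma memLp_compH (L : H m n k →ₗ[ℝ] H m n k) {F : Ω → H m n k} (hF : MemLp F 2 P) :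
    MemLp (fun ω => L (F ω)) 2 P :=
  (LinearMap.toContinuousLinearMap L).comp_memLp' hF

lemma memLp_compR (L : H m n k →ₗ[ℝ] ℝ) {F : Ω → H m n k} (hF : MemLp F 2 P) :
    MemLp (fun ω => L (F ω)) 2 P :=
  (LinearMap.toContinuousLinearMap L).comp_memLp' hF

lemma integrable_mul2 {f g : Ω → ℝ} (hf : MemLp f 2 P) (hg : MemLp g 2 P) :
    Integrable (fun ω => f ω * g ω) P := by
  have h1 := (hf.add hg).integrable_sq
  have h2 := hf.integrable_sq
  have h3 := hg.integrable_sq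
  have h := (((h1.sub h2).sub h3).const_mul (1/2 : ℝ))
  refine h.congr (Filter.Eventually.of_forall fun ω => ?_)
  simp only [Pi.sub_apply, Pi.add_apply]
  ring

end Meas
end Aux

/-- clean detail-energy contraction: under the setting of the
detail-energy control proposition, if additionally `Q_d(M(Q_c z)) = 0` for all `z`
and `Q_d b = 0`, then
`E[‖Q_d X'‖₂²] ≤ ρ²(1−w)²·E[‖Q_d X‖₂²] + σ²(1−w')²·E[‖Q_d η‖₂²]`. -/
theorem clean_detail_energy_contraction {m n k : ℕ}
    (hm : 0 < m) (hn : 0 < n) (hk : 0 < k)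
    {Ω : Type*} [MeasurableSpace Ω] (P : Measure Ω) [IsProbabilityMeasure P]
    (M : H m n k →ₗ[ℝ] H m n k) (b : H m n k) (σ w w' : ℝ)
    (hσ : 0 ≤ σ) (hw0 : 0 ≤ w) (hw1 : w ≤ 1) (hw'0 : 0 ≤ w') (hw'1 : w' ≤ 1)
    (X η : Ω → H m n k) (hX : MemLp X 2 P) (hη : MemLp η 2 P)
    (hindep : ProbabilityTheory.IndepFun η X P)
    (hη0 : ∫ ω, η ω ∂P = 0)
    (ρ : ℝ)
    (hρ : ∀ z : H m n k, norm2 (Qd (M (Qd z))) ≤ ρ * norm2 (Qd z))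
    (hdc : ∀ z : H m n k, Qd (M (Qc z)) = 0)
    (hb : Qd b = 0) :
    ∫ ω, norm2 (Qd (M (A w (X ω)) + b + σ • A w' (η ω))) ^ 2 ∂P
      ≤ ρ ^ 2 * (1 - w) ^ 2 * ∫ ω, norm2 (Qd (X ω)) ^ 2 ∂P
        + σ ^ 2 * (1 - w') ^ 2 * ∫ ω, norm2 (Qd (η ω)) ^ 2 ∂P := by
  classical
  set s : ℝ := σ * (1 - w') with hs
  -- linear maps for the two components
  set T : H m n k →ₗ[ℝ] H m n k := (1 - w) • ((Qdlm m n k) ∘ₗ M ∘ₗ (Qdlm m n k)) with hTdef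
  set C : H m n k →ₗ[ℝ] H m n k := s • (Qdlm m n k) with hCdef
  have hT : ∀ z : H m n k, T z = (1 - w) • Qd (M (Qd z)) := fun z => rfl
  have hC : ∀ z : H m n k, C z = s • Qd z := fun z => rfl
  -- decomposition of the detail part of the updated state
  have hA : ∀ (u : ℝ) (z : H m n k), A u z = (1 - u) • Qd z + S z := by
    intro u z
    unfold A Qd
    module
  have hdecomp : ∀ ω, Qd (M (A w (X ω)) + b + σ • A w' (η ω))
      = T (X ω) + C (η ω) := by
    intro ω
    rw [hT, hC, Qd_add', Qd_add', hb, add_zero]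
    congr 1
    · rw [hA, map_add, _root_.map_smul, Qd_add', Qd_smul',
        show Qd (M (S (X ω))) = 0 from hdc (X ω), add_zero]
    · rw [Qd_smul', hA, Qd_add', Qd_smul', Qd_Qd, Qd_S, add_zero, smul_smul]
  -- Memℒp facts
  have hTX : MemLp (fun ω => T (X ω)) 2 P := memLp_compH T hX
  have hCη : MemLp (fun ω => C (η ω)) 2 P := memLp_compH C hη
  have hcoord : ∀ (L : H m n k →ₗ[ℝ] H m n k) (F : Ω → H m n k), MemLp F 2 P →
      ∀ (i : Fin (m*k)) (j : Fin (n*k)), MemLp (fun ω => L (F ω) i j) 2 P :=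
    fun L F hF i j => memLp_compR ((evalLm i j) ∘ₗ L) hF
  have hInt_ip : ∀ (L L' : H m n k →ₗ[ℝ] H m n k) (F G : Ω → H m n k),
      MemLp F 2 P → MemLp G 2 P →
      Integrable (fun ω => ip (L (F ω)) (L' (G ω))) P := by
    intro L L' F G hF hG
    have : Integrable (fun ω => ∑ i, ∑ j, L (F ω) i j * L' (G ω) i j) P :=
      integrable_finset_sum _ fun i _ => integrable_finset_sum _ fun j _ =>
        integrable_mul2 (hcoord L F hF i j) (hcoord L' G hG i j)
    exact this
  have hIaa : Integrable (fun ω => ip (T (X ω)) (T (X ω))) P := hInt_ip T T X X hX hX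
  have hIac : Integrable (fun ω => ip (T (X ω)) (C (η ω))) P := hInt_ip T C X η hX hη
  have hIcc : Integrable (fun ω => ip (C (η ω)) (C (η ω))) P := hInt_ip C C η η hη hη
  have hIQX : Integrable (fun ω => norm2 (Qd (X ω)) ^ 2) P := by
    have := hInt_ip (Qdlm m n k) (Qdlm m n k) X X hX hX
    exact this.congr (Filter.Eventually.of_forall fun ω => (norm2_sq _).symm)
  -- cross term vanishes
  have hcross : ∫ ω, ip (T (X ω)) (C (η ω)) ∂P = 0 := by
    have hrw : (fun ω => ip (T (X ω)) (C (η ω)))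
        = fun ω => ∑ i, ∑ j, T (X ω) i j * C (η ω) i j := rfl
    rw [hrw, integral_finset_sum _ (fun i _ => integrable_finset_sum _ fun j _ =>
      integrable_mul2 (hcoord T X hX i j) (hcoord C η hη i j))]
    refine Finset.sum_eq_zero fun i _ => ?_
    rw [integral_finset_sum _ (fun j _ =>
      integrable_mul2 (hcoord T X hX i j) (hcoord C η hη i j))]
    refine Finset.sum_eq_zero fun j _ => ?_
    have mC : Measurable (fun z : H m n k => C z i j) :=
      (LinearMap.toContinuousLinearMap ((evalLm i j) ∘ₗ C)).continuous.measurable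
    have mT : Measurable (fun z : H m n k => T z i j) :=
      (LinearMap.toContinuousLinearMap ((evalLm i j) ∘ₗ T)).continuous.measurable
    have hind : ProbabilityTheory.IndepFun (fun ω => C (η ω) i j) (fun ω => T (X ω) i j) P :=
      hindep.comp mC mT
    have hIc : Integrable (fun ω => C (η ω) i j) P :=
      (hcoord C η hη i j).integrable one_le_two
    have hIT : Integrable (fun ω => T (X ω) i j) P :=
      (hcoord T X hX i j).integrable one_le_two
    have hmul := hind.integral_fun_mul_eq_mul_integral hIc.1 hIT.1
    have hCη0 : ∫ ω, C (η ω) i j ∂P = 0 := by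
      have hcc := (LinearMap.toContinuousLinearMap ((evalLm i j) ∘ₗ C)).integral_comp_comm
        (hη.integrable one_le_two)
      have : ∫ ω, C (η ω) i j ∂P
          = (LinearMap.toContinuousLinearMap ((evalLm i j) ∘ₗ C)) (∫ ω, η ω ∂P) := hcc
      rw [this, hη0, map_zero]
    have hcomm : ∫ ω, T (X ω) i j * C (η ω) i j ∂P
        = ∫ ω, C (η ω) i j * T (X ω) i j ∂P := by
      congr 1; funext ω; ring
    exact hcomm.trans (hmul.trans (by rw [hCη0, zero_mul]))
  -- pointwise bounds
  have habound : ∀ ω, ip (T (X ω)) (T (X ω)) ≤ ρ^2 * (1-w)^2 * norm2 (Qd (X ω)) ^ 2 := by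
    intro ω
    rw [← norm2_sq]
    have h1 : norm2 (T (X ω)) ≤ (1 - w) * (ρ * norm2 (Qd (X ω))) := by
      rw [hT, norm2_smul, abs_of_nonneg (by linarith : (0:ℝ) ≤ 1 - w)]
      exact mul_le_mul_of_nonneg_left (hρ (X ω)) (by linarith)
    calc norm2 (T (X ω)) ^ 2 ≤ ((1-w) * (ρ * norm2 (Qd (X ω)))) ^ 2 :=
          pow_le_pow_left₀ (norm2_nonneg _) h1 2
      _ = ρ^2 * (1-w)^2 * norm2 (Qd (X ω)) ^ 2 := by ring
  have hceq : ∀ ω, ip (C (η ω)) (C (η ω)) = σ^2 * (1-w')^2 * norm2 (Qd (η ω)) ^ 2 := by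
    intro ω
    rw [← norm2_sq, hC, norm2_smul, mul_pow, sq_abs, hs]
    ring
  -- assemble
  calc ∫ ω, norm2 (Qd (M (A w (X ω)) + b + σ • A w' (η ω))) ^ 2 ∂P
      = ∫ ω, (ip (T (X ω)) (T (X ω)) + 2 * ip (T (X ω)) (C (η ω))
          + ip (C (η ω)) (C (η ω))) ∂P := by
        refine integral_congr_ae (Filter.Eventually.of_forall fun ω => ?_)
        show norm2 (Qd (M (A w (X ω)) + b + σ • A w' (η ω))) ^ 2
          = ip (T (X ω)) (T (X ω)) + 2 * ip (T (X ω)) (C (η ω)) + ip (C (η ω)) (C (η ω))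
        rw [hdecomp ω, norm2_sq, ip_expand]
    _ = (∫ ω, ip (T (X ω)) (T (X ω)) ∂P) + 2 * (∫ ω, ip (T (X ω)) (C (η ω)) ∂P)
          + ∫ ω, ip (C (η ω)) (C (η ω)) ∂P := by
        have e1 : ∫ ω, (ip (T (X ω)) (T (X ω)) + 2 * ip (T (X ω)) (C (η ω)))
              + ip (C (η ω)) (C (η ω)) ∂P
            = (∫ ω, ip (T (X ω)) (T (X ω)) + 2 * ip (T (X ω)) (C (η ω)) ∂P)
              + ∫ ω, ip (C (η ω)) (C (η ω)) ∂P :=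
          integral_add (hIaa.add (hIac.const_mul 2)) hIcc
        have e2 : ∫ ω, ip (T (X ω)) (T (X ω)) + 2 * ip (T (X ω)) (C (η ω)) ∂P
            = (∫ ω, ip (T (X ω)) (T (X ω)) ∂P) + ∫ ω, 2 * ip (T (X ω)) (C (η ω)) ∂P :=
          integral_add hIaa (hIac.const_mul 2)
        have e3 : ∫ ω, 2 * ip (T (X ω)) (C (η ω)) ∂P
            = 2 * ∫ ω, ip (T (X ω)) (C (η ω)) ∂P := integral_const_mul 2 _
        rw [e1, e2, e3]
    _ = (∫ ω, ip (T (X ω)) (T (X ω)) ∂P) + ∫ ω, ip (C (η ω)) (C (η ω)) ∂P := by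
        rw [hcross]; ring
    _ ≤ ρ ^ 2 * (1 - w) ^ 2 * (∫ ω, norm2 (Qd (X ω)) ^ 2 ∂P)
          + σ ^ 2 * (1 - w') ^ 2 * ∫ ω, norm2 (Qd (η ω)) ^ 2 ∂P := by
        refine add_le_add ?_ (le_of_eq ?_)
        · calc ∫ ω, ip (T (X ω)) (T (X ω)) ∂P
              ≤ ∫ ω, ρ^2 * (1-w)^2 * norm2 (Qd (X ω)) ^ 2 ∂P :=
                integral_mono hIaa (hIQX.const_mul _) habound
            _ = ρ ^ 2 * (1 - w) ^ 2 * ∫ ω, norm2 (Qd (X ω)) ^ 2 ∂P :=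
                integral_const_mul _ _
        · calc ∫ ω, ip (C (η ω)) (C (η ω)) ∂P
              = ∫ ω, σ^2 * (1-w')^2 * norm2 (Qd (η ω)) ^ 2 ∂P :=
                integral_congr_ae (Filter.Eventually.of_forall hceq)
            _ = σ ^ 2 * (1 - w') ^ 2 * ∫ ω, norm2 (Qd (η ω)) ^ 2 ∂P :=
                integral_const_mul _ _

end Stroke
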